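/- arXiv:2603.20434 — 2 statements merged into one kernel-verified Lean document; each statement's English description precedes it below -/
import Mathlib

section
/- Let a > 0 and b > 0. For all ε_R > 0 and ε_v > 0 with ε_R + ε_v < 1, one has (1/(1 − ε_R − ε_v))·(a/ε_R + b/ε_v) ≥ 4·(√a + √b)². Moreover, equality holds for ε_R = √a/(2(√a + √b)) and ε_v = √b/(2(√a + √b)), so that the infimum of the left-hand side over the constraint set equals 4·(√a + √b)². -/
open Filter Matrix

/-- Euclidean space `ℝ^n`. -/
abbrev E (n : ℕ) := EuclideanSpace ℝ (Fin n)

/-- Smallest eigenvalue of a (Hermitian) real matrix. -/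
noncomputable def lamMin {n : ℕ} (M : Matrix (Fin n) (Fin n) ℝ) : ℝ :=
  if h : M.IsHermitian then ⨅ i, h.eigenvalues i else 0

/-- Largest eigenvalue of a (Hermitian) real matrix. -/
noncomputable def lamMax {n : ℕ} (M : Matrix (Fin n) (Fin n) ℝ) : ℝ :=
  if h : M.IsHermitian then ⨆ i, h.eigenvalues i else 0

open scoped Classical in
/-- The positive semidefinite square root `M^{1/2}` of a positive semidefinite matrix. -/
noncomputable def matSqrt {n : ℕ} (M : Matrix (Fin n) (Fin n) ℝ) : Matrix (Fin n) (Fin n) ℝ :=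
  if h : M.PosSemidef then (h.1.eigenvectorUnitary : Matrix (Fin n) (Fin n) ℝ) *
      diagonal ((↑) ∘ Real.sqrt ∘ h.1.eigenvalues) * (star h.1.eigenvectorUnitary : Matrix (Fin n) (Fin n) ℝ)
    else 0

/-- `M^{-1/2} := (M^{1/2})⁻¹`. -/
noncomputable def invSqrt {n : ℕ} (M : Matrix (Fin n) (Fin n) ℝ) : Matrix (Fin n) (Fin n) ℝ :=
  (matSqrt M)⁻¹

/-- Operator norm of a matrix induced by the Euclidean norms. -/
noncomputable def opNorm {m n : ℕ} (M : Matrix (Fin m) (Fin n) ℝ) : ℝ :=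
  ‖LinearMap.toContinuousLinearMap (Matrix.toEuclideanLin M)‖

/-- Matrix-vector multiplication as a map between Euclidean spaces. -/
def mv {m n : ℕ} (M : Matrix (Fin m) (Fin n) ℝ) (v : E n) : E m := WithLp.toLp 2 (M.mulVec v)

theorem stmt10 (a b : ℝ) (ha : 0 < a) (hb : 0 < b) :
    (∀ εR εv : ℝ, 0 < εR → 0 < εv → εR + εv < 1 →
        4 * (Real.sqrt a + Real.sqrt b) ^ 2 ≤ (1 / (1 - εR - εv)) * (a / εR + b / εv)) ∧
    (1 / (1 - Real.sqrt a / (2 * (Real.sqrt a + Real.sqrt b)) -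
            Real.sqrt b / (2 * (Real.sqrt a + Real.sqrt b)))) *
        (a / (Real.sqrt a / (2 * (Real.sqrt a + Real.sqrt b))) +
          b / (Real.sqrt b / (2 * (Real.sqrt a + Real.sqrt b)))) =
      4 * (Real.sqrt a + Real.sqrt b) ^ 2 ∧
    sInf {y : ℝ | ∃ εR εv : ℝ, 0 < εR ∧ 0 < εv ∧ εR + εv < 1 ∧
        y = (1 / (1 - εR - εv)) * (a / εR + b / εv)} =
      4 * (Real.sqrt a + Real.sqrt b) ^ 2 := by

  set sa := Real.sqrt a with hsadef
  set sb := Real.sqrt b with hsbdef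
  have hsa : 0 < sa := Real.sqrt_pos.2 ha
  have hsb : 0 < sb := Real.sqrt_pos.2 hb
  have haa : sa ^ 2 = a := Real.sq_sqrt ha.le
  have hbb : sb ^ 2 = b := Real.sq_sqrt hb.le
  have hs : 0 < sa + sb := by linarith
  have key : ∀ εR εv : ℝ, 0 < εR → 0 < εv → εR + εv < 1 →
      4 * (sa + sb) ^ 2 ≤ (1 / (1 - εR - εv)) * (a / εR + b / εv) := by
    intro εR εv hR hv hsum
    have ht : 0 < 1 - εR - εv := by linarith
    rw [one_div, inv_mul_eq_div, le_div_iff₀ ht, div_add_div _ _ (ne_of_gt hR) (ne_of_gt hv),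
      le_div_iff₀ (by positivity)]
    nlinarith [mul_nonneg (sq_nonneg (sa - 2 * (sa + sb) * εR)) hv.le,
      mul_nonneg (sq_nonneg (sb - 2 * (sa + sb) * εv)) hR.le]
  have heqR : 0 < sa / (2 * (sa + sb)) := by positivity
  have heqv : 0 < sb / (2 * (sa + sb)) := by positivity
  have hsum : sa / (2 * (sa + sb)) + sb / (2 * (sa + sb)) = 1 / 2 := by
    field_simp
  have heq : (1 / (1 - sa / (2 * (sa + sb)) - sb / (2 * (sa + sb)))) *
      (a / (sa / (2 * (sa + sb))) + b / (sb / (2 * (sa + sb)))) = 4 * (sa + sb) ^ 2 := by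
    have h1 : a / (sa / (2 * (sa + sb))) = 2 * (sa + sb) * sa := by
      rw [← haa]; field_simp
    have h2 : b / (sb / (2 * (sa + sb))) = 2 * (sa + sb) * sb := by
      rw [← hbb]; field_simp
    have h3 : 1 - sa / (2 * (sa + sb)) - sb / (2 * (sa + sb)) = 1 / 2 := by linarith
    rw [h1, h2, h3]; ring
  refine ⟨key, heq, ?_⟩
  have hmem : 4 * (sa + sb) ^ 2 ∈ {y : ℝ | ∃ εR εv : ℝ, 0 < εR ∧ 0 < εv ∧ εR + εv < 1 ∧
      y = (1 / (1 - εR - εv)) * (a / εR + b / εv)} :=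
    ⟨_, _, heqR, heqv, by rw [hsum]; norm_num, heq.symm⟩
  have hlb : ∀ y ∈ {y : ℝ | ∃ εR εv : ℝ, 0 < εR ∧ 0 < εv ∧ εR + εv < 1 ∧
      y = (1 / (1 - εR - εv)) * (a / εR + b / εv)}, 4 * (sa + sb) ^ 2 ≤ y := by
    rintro y ⟨εR, εv, hR, hv, hlt, rfl⟩
    exact key εR εv hR hv hlt
  exact le_antisymm (csInf_le ⟨_, hlb⟩ hmem) (le_csInf ⟨_, hmem⟩ hlb)
end

section
/- Let X ⊂ ℝ^{n_x} be a nonempty compact set, let x : [0,∞) → ℝ^{n_x} be differentiable with x'(t) = f(x(t)) and x(t) ∈ X for all t ≥ 0, let v : [0,∞) → ℝ^{n_y} satisfy ‖v(t)‖ ≤ v̄ for all t ≥ 0, and let ẑ : [0,∞) → ℝ^{n_z} be differentiable with ẑ'(t) = A ẑ(t) + B(h(x(t)) + v(t)) for all t ≥ 0. Let T̂ : ℝ^{n_x} → ℝ^{n_z} be continuously differentiable with PDE residual R, set R̄ := sup_{x∈X} ‖R(x)‖ and e_z(t) := ẑ(t) − T̂(x(t)). Let P, Q ∈ ℝ^{n_z×n_z}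 be symmetric positive definite with P A + Aᵀ P = −Q. Then for all ε_R > 0 and ε_v > 0 with ε_R + ε_v < 1, setting c := (1 − ε_R − ε_v)·λ_min(Q)/λ_max(P), one has limsup_{t→∞} ‖e_z(t)‖ ≤ √(1/(c·λ_min(P))) · √( (‖Q^{−1/2}P‖²/ε_R)·R̄² + (‖Q^{−1/2}P B‖²/ε_v)·v̄² ). -/
open Filter Matrix

local notation "⟪" x ", " y "⟫" => @inner ℝ _ _ x y

lemma mv_eq_clm {m n : ℕ} (M : Matrix (Fin m) (Fin n) ℝ) (y : E n) :
    mv M y = LinearMap.toContinuousLinearMap (Matrix.toEuclideanLin M) y := rfl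

lemma norm_mv_le {m n : ℕ} (M : Matrix (Fin m) (Fin n) ℝ) (y : E n) :
    ‖mv M y‖ ≤ opNorm M * ‖y‖ := by
  rw [mv_eq_clm]
  exact (LinearMap.toContinuousLinearMap (Matrix.toEuclideanLin M)).le_opNorm y

lemma continuous_mv {m n : ℕ} (M : Matrix (Fin m) (Fin n) ℝ) : Continuous (mv M) :=
  (LinearMap.toContinuousLinearMap (Matrix.toEuclideanLin M)).continuous

lemma mv_add {m n : ℕ} (M : Matrix (Fin m) (Fin n) ℝ) (a b : E n) :
    mv M (a + b) = mv M a + mv M b := by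
  simp only [mv_eq_clm]; exact map_add _ a b

lemma mv_sub {m n : ℕ} (M : Matrix (Fin m) (Fin n) ℝ) (a b : E n) :
    mv M (a - b) = mv M a - mv M b := by
  simp only [mv_eq_clm]; exact map_sub _ a b

lemma mv_mv {m n k : ℕ} (M : Matrix (Fin m) (Fin n) ℝ) (N : Matrix (Fin n) (Fin k) ℝ) (a : E k) :
    mv M (mv N a) = mv (M * N) a := by
  show WithLp.toLp 2 (M.mulVec (N.mulVec a.ofLp)) = WithLp.toLp 2 ((M * N).mulVec a.ofLp)
  rw [Matrix.mulVec_mulVec]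

lemma mv_addM {m n : ℕ} (M N : Matrix (Fin m) (Fin n) ℝ) (a : E n) :
    mv (M + N) a = mv M a + mv N a := by
  show WithLp.toLp 2 ((M + N).mulVec a.ofLp) = WithLp.toLp 2 (M.mulVec a.ofLp) + WithLp.toLp 2 (N.mulVec a.ofLp)
  rw [Matrix.add_mulVec, WithLp.toLp_add]

lemma mv_negM {m n : ℕ} (M : Matrix (Fin m) (Fin n) ℝ) (a : E n) :
    mv (-M) a = -(mv M a) := by
  show WithLp.toLp 2 ((-M).mulVec a.ofLp) = -WithLp.toLp 2 (M.mulVec a.ofLp)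
  rw [Matrix.neg_mulVec, WithLp.toLp_neg]

lemma inner_mv {m n : ℕ} (M : Matrix (Fin m) (Fin n) ℝ) (a : E n) (b : E m) :
    ⟪mv M a, b⟫ = ⟪a, mv Mᵀ b⟫ := by
  simp only [EuclideanSpace.inner_eq_star_dotProduct]
  show dotProduct b.ofLp (star (M.mulVec a.ofLp)) = dotProduct (Mᵀ.mulVec b.ofLp) (star a.ofLp)
  simp only [star_trivial]
  rw [dotProduct_mulVec, ← Matrix.mulVec_transpose]

lemma herm_transpose {n : ℕ} {M : Matrix (Fin n) (Fin n) ℝ} (hM : M.IsHermitian) : Mᵀ = M := by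
  rw [← Matrix.conjTranspose_eq_transpose_of_trivial]; exact hM

lemma inner_mv_eigen {n : ℕ} {M : Matrix (Fin n) (Fin n) ℝ} (hM : M.IsHermitian) (i : Fin n)
    (y : E n) :
    ⟪hM.eigenvectorBasis i, mv M y⟫ = hM.eigenvalues i * ⟪hM.eigenvectorBasis i, y⟫ := by
  have key : mv M (hM.eigenvectorBasis i) = hM.eigenvalues i • hM.eigenvectorBasis i :=
    by have := hM.mulVec_eigenvectorBasis i; show WithLp.toLp 2 _ = _; rw [this, WithLp.toLp_smul, WithLp.toLp_ofLp]
  rw [real_inner_comm, inner_mv, herm_transpose hM, key, real_inner_smul_right,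
    real_inner_comm]

lemma quad_eq {n : ℕ} {M : Matrix (Fin n) (Fin n) ℝ} (hM : M.IsHermitian) (y : E n) :
    ⟪y, mv M y⟫ = ∑ i, hM.eigenvalues i * (⟪hM.eigenvectorBasis i, y⟫) ^ 2 := by
  rw [← hM.eigenvectorBasis.sum_inner_mul_inner y (mv M y)]
  refine Finset.sum_congr rfl fun i _ => ?_
  rw [inner_mv_eigen hM i y, real_inner_comm y]
  ring

lemma norm_sq_eq {n : ℕ} {M : Matrix (Fin n) (Fin n) ℝ} (hM : M.IsHermitian) (y : E n) :
    ‖y‖ ^ 2 = ∑ i, (⟪hM.eigenvectorBasis i, y⟫) ^ 2 := by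
  rw [← real_inner_self_eq_norm_sq, ← hM.eigenvectorBasis.sum_inner_mul_inner y y]
  refine Finset.sum_congr rfl fun i _ => ?_
  rw [real_inner_comm y]
  ring

lemma lamMin_quad {n : ℕ} [Nonempty (Fin n)] {M : Matrix (Fin n) (Fin n) ℝ}
    (hM : M.IsHermitian) (y : E n) :
    lamMin M * ‖y‖ ^ 2 ≤ ⟪y, mv M y⟫ := by
  rw [quad_eq hM y, norm_sq_eq hM y, Finset.mul_sum]
  refine Finset.sum_le_sum fun i _ => ?_
  have h1 : lamMin M ≤ hM.eigenvalues i := by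
    rw [lamMin, dif_pos hM]
    exact ciInf_le (Set.Finite.bddBelow (Set.finite_range _)) i
  exact mul_le_mul_of_nonneg_right h1 (sq_nonneg _)

lemma quad_lamMax {n : ℕ} [Nonempty (Fin n)] {M : Matrix (Fin n) (Fin n) ℝ}
    (hM : M.IsHermitian) (y : E n) :
    ⟪y, mv M y⟫ ≤ lamMax M * ‖y‖ ^ 2 := by
  rw [quad_eq hM y, norm_sq_eq hM y, Finset.mul_sum]
  refine Finset.sum_le_sum fun i _ => ?_
  have h1 : hM.eigenvalues i ≤ lamMax M := by
    rw [lamMax, dif_pos hM]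
    exact le_ciSup (Set.Finite.bddAbove (Set.finite_range _)) i
  exact mul_le_mul_of_nonneg_right h1 (sq_nonneg _)

lemma lamMin_pos {n : ℕ} [Nonempty (Fin n)] {M : Matrix (Fin n) (Fin n) ℝ} (hM : M.PosDef) :
    0 < lamMin M := by
  rw [lamMin, dif_pos hM.isHermitian]
  obtain ⟨i, hi⟩ := exists_eq_ciInf_of_finite (f := hM.isHermitian.eigenvalues)
  rw [← hi]
  exact hM.eigenvalues_pos i

lemma lamMax_pos {n : ℕ} [Nonempty (Fin n)] {M : Matrix (Fin n) (Fin n) ℝ} (hM : M.PosDef) :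
    0 < lamMax M := by
  rw [lamMax, dif_pos hM.isHermitian]
  obtain ⟨i⟩ := ‹Nonempty (Fin n)›
  exact lt_of_lt_of_le (hM.eigenvalues_pos i)
    (le_ciSup (Set.Finite.bddAbove (Set.finite_range _)) i)

section sqrtFacts
variable {n : ℕ} {Q : Matrix (Fin n) (Fin n) ℝ}

lemma matSqrt_eq (hQ : Q.PosDef) : matSqrt Q =
    (hQ.posSemidef.1.eigenvectorUnitary : Matrix (Fin n) (Fin n) ℝ) *
      diagonal ((↑) ∘ Real.sqrt ∘ hQ.posSemidef.1.eigenvalues) *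
      (star hQ.posSemidef.1.eigenvectorUnitary : Matrix (Fin n) (Fin n) ℝ) := by
  rw [matSqrt, dif_pos hQ.posSemidef]

lemma matSqrt_mul_self (hQ : Q.PosDef) : matSqrt Q * matSqrt Q = Q := by
  rw [matSqrt_eq hQ]
  have hs := hQ.posSemidef.1.spectral_theorem
  rw [Unitary.conjStarAlgAut_apply] at hs
  have hU : (star hQ.posSemidef.1.eigenvectorUnitary : Matrix (Fin n) (Fin n) ℝ) *
      hQ.posSemidef.1.eigenvectorUnitary = 1 := Unitary.coe_star_mul_self _
  set U : Matrix (Fin n) (Fin n) ℝ := (hQ.posSemidef.1.eigenvectorUnitary : Matrix (Fin n) (Fin n) ℝ)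
  have key : ∀ D : Matrix (Fin n) (Fin n) ℝ,
      U * D * star U * (U * D * star U) = U * (D * D) * star U := by
    intro D
    calc U * D * star U * (U * D * star U) = U * (D * (star U * U) * D) * star U := by
          simp only [Matrix.mul_assoc]
      _ = U * (D * D) * star U := by rw [hU, Matrix.mul_one]
  rw [key, diagonal_mul_diagonal]
  conv_rhs => rw [hs]
  refine congrArg (fun D => U * D * star U) ?_
  congr 1
  funext i
  simp [Real.mul_self_sqrt (hQ.posSemidef.eigenvalues_nonneg i)]

lemma matSqrt_herm (hQ : Q.PosDef) : (matSqrt Q).IsHermitian := by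
  rw [matSqrt_eq hQ]
  rw [Matrix.star_eq_conjTranspose]
  exact isHermitian_mul_mul_conjTranspose _ (isHermitian_diagonal _)

lemma matSqrt_det_isUnit (hQ : Q.PosDef) : IsUnit (matSqrt Q).det := by
  have h2 : (matSqrt Q).det * (matSqrt Q).det = Q.det := by
    rw [← Matrix.det_mul, matSqrt_mul_self hQ]
  have : (matSqrt Q).det ≠ 0 := by
    intro h0
    rw [h0, mul_zero] at h2
    exact hQ.det_pos.ne' h2.symm
  exact this.isUnit

lemma invSqrt_mul (hQ : Q.PosDef) : invSqrt Q * matSqrt Q = 1 :=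
  Matrix.nonsing_inv_mul _ (matSqrt_det_isUnit hQ)

lemma mul_invSqrt (hQ : Q.PosDef) : matSqrt Q * invSqrt Q = 1 :=
  Matrix.mul_nonsing_inv _ (matSqrt_det_isUnit hQ)

/-- key rewriting: ⟪P u, w⟫ = ⟪Q^{1/2} u, Q^{-1/2} P w⟫ for symmetric `P`. -/
lemma inner_P_split (hQ : Q.PosDef) {P : Matrix (Fin n) (Fin n) ℝ} (hP : P.IsHermitian) (u w : E n) :
    ⟪mv P u, w⟫ = ⟪mv (matSqrt Q) u, mv (invSqrt Q * P) w⟫ := by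
  rw [inner_mv P u w, herm_transpose hP, inner_mv (matSqrt Q) u,
    herm_transpose (matSqrt_herm hQ), mv_mv, ← Matrix.mul_assoc, mul_invSqrt hQ,
    Matrix.one_mul]

lemma norm_mv_sqrt_sq (hQ : Q.PosDef) (u : E n) : ‖mv (matSqrt Q) u‖ ^ 2 = ⟪u, mv Q u⟫ := by
  rw [← real_inner_self_eq_norm_sq, real_inner_comm, inner_mv,
    herm_transpose (matSqrt_herm hQ), mv_mv, matSqrt_mul_self hQ]

end sqrtFacts

lemma two_mul_inner_le {n : ℕ} {ε : ℝ} (hε : 0 < ε) (a b : E n) :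
    2 * ⟪a, b⟫ ≤ ε * ‖a‖ ^ 2 + ‖b‖ ^ 2 / ε := by
  have h1 : 2 * ⟪a, b⟫ - ε * ‖a‖ ^ 2 ≤ ‖b‖ ^ 2 / ε := by
    rw [le_div_iff₀ hε]
    nlinarith [sq_nonneg (ε * ‖a‖ - ‖b‖), real_inner_le_norm a b, norm_nonneg a, norm_nonneg b]
  linarith

theorem stmt11 {nx ny nz : ℕ}
    (f : E nx → E nx) (hf : Continuous f)
    (h : E nx → E ny) (hh : Continuous h)
    (A : Matrix (Fin nz) (Fin nz) ℝ) (B : Matrix (Fin nz) (Fin ny) ℝ)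
    (X : Set (E nx)) (hXne : X.Nonempty) (hXc : IsCompact X)
    (x : ℝ → E nx) (hx : ∀ t ≥ (0:ℝ), HasDerivAt x (f (x t)) t)
    (hxX : ∀ t ≥ (0:ℝ), x t ∈ X)
    (vbar : ℝ) (hvbar : 0 ≤ vbar)
    (v : ℝ → E ny) (hv : ∀ t ≥ (0:ℝ), ‖v t‖ ≤ vbar)
    (zh : ℝ → E nz)
    (hz : ∀ t ≥ (0:ℝ), HasDerivAt zh (mv A (zh t) + mv B (h (x t) + v t)) t)
    (T : E nx → E nz) (hT : ContDiff ℝ 1 T)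
    (R : E nx → E nz)
    (hR : ∀ p, R p = fderiv ℝ T p (f p) - mv A (T p) - mv B (h p))
    (Rbar : ℝ) (hRbar : Rbar = sSup ((fun p => ‖R p‖) '' X))
    (P Q : Matrix (Fin nz) (Fin nz) ℝ) (hP : P.PosDef) (hQ : Q.PosDef)
    (hLyap : P * A + Aᵀ * P = -Q)
    (εR εv : ℝ) (hεR : 0 < εR) (hεv : 0 < εv) (hsum : εR + εv < 1) :
    limsup (fun t => ‖zh t - T (x t)‖) atTop ≤
      Real.sqrt (1 / (((1 - εR - εv) * lamMin Q / lamMax P) * lamMin P)) *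
        Real.sqrt ((opNorm (invSqrt Q * P)) ^ 2 / εR * Rbar ^ 2 +
          (opNorm (invSqrt Q * P * B)) ^ 2 / εv * vbar ^ 2) := by
  rcases Nat.eq_zero_or_pos nz with hnz | hnz
  · subst hnz
    haveI : Subsingleton (E 0) := ⟨fun a b => PiLp.ext fun i => i.elim0⟩
    have hz0 : ∀ t : ℝ, ‖zh t - T (x t)‖ = 0 := fun t => by
      rw [Subsingleton.elim (zh t - T (x t)) 0, norm_zero]
    have h0 : (fun t : ℝ => ‖zh t - T (x t)‖) = fun _ => (0:ℝ) := funext hz0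
    rw [h0, limsup_const]
    exact mul_nonneg (Real.sqrt_nonneg _) (Real.sqrt_nonneg _)
  haveI : Nonempty (Fin nz) := ⟨⟨0, hnz⟩⟩
  set e : ℝ → E nz := fun t => zh t - T (x t) with he_def
  set ed : ℝ → E nz := fun t => mv A (e t) + mv B (v t) - R (x t) with hed_def
  set V : ℝ → ℝ := fun t => ⟪e t, mv P (e t)⟫ with hV_def
  -- derivative of e
  have hed : ∀ t ≥ (0:ℝ), HasDerivAt e (ed t) t := by
    intro t ht
    have hTd : HasDerivAt (fun s => T (x s)) (fderiv ℝ T (x t) (f (x t))) t :=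
      ((hT.differentiable one_ne_zero) (x t)).hasFDerivAt.comp_hasDerivAt t (hx t ht)
    have h1 := (hz t ht).sub hTd
    refine h1.congr_deriv ?_
    simp only [hed_def, he_def, hR (x t)]
    rw [mv_sub, mv_add]
    abel
  -- Rbar bound
  have hRcont : Continuous R := by
    have h1 : Continuous (fun p => fderiv ℝ T p (f p)) :=
      (hT.continuous_fderiv one_ne_zero).clm_apply hf
    have h2 : R = fun p => fderiv ℝ T p (f p) - mv A (T p) - mv B (h p) := funext hR
    rw [h2]
    exact (h1.sub ((continuous_mv A).comp hT.continuous)).sub ((continuous_mv B).comp hh)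
  have hRb : ∀ p ∈ X, ‖R p‖ ≤ Rbar := by
    intro p hp
    rw [hRbar]
    exact le_csSup (hXc.image (continuous_norm.comp hRcont)).bddAbove ⟨p, hp, rfl⟩
  have hRbar0 : 0 ≤ Rbar := le_trans (norm_nonneg _) (hRb _ hXne.choose_spec)
  -- constants
  have hlQ : 0 < lamMin Q := lamMin_pos hQ
  have hlP : 0 < lamMin P := lamMin_pos hP
  have hLP : 0 < lamMax P := lamMax_pos hP
  have hone : 0 < 1 - εR - εv := by linarith
  set c : ℝ := (1 - εR - εv) * lamMin Q / lamMax P with hc_def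
  have hc : 0 < c := div_pos (mul_pos hone hlQ) hLP
  set NR : ℝ := opNorm (invSqrt Q * P) with hNR_def
  set NB : ℝ := opNorm (invSqrt Q * P * B) with hNB_def
  have hNR0 : 0 ≤ NR := norm_nonneg _
  have hNB0 : 0 ≤ NB := norm_nonneg _
  set D : ℝ := NR ^ 2 / εR * Rbar ^ 2 + NB ^ 2 / εv * vbar ^ 2 with hD_def
  have hD0 : 0 ≤ D :=
    add_nonneg (mul_nonneg (div_nonneg (sq_nonneg _) hεR.le) (sq_nonneg _))
      (mul_nonneg (div_nonneg (sq_nonneg _) hεv.le) (sq_nonneg _))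
  -- V basic bounds
  have hVpos : ∀ t, lamMin P * ‖e t‖ ^ 2 ≤ V t := fun t => lamMin_quad hP.isHermitian (e t)
  have hV0 : ∀ t, 0 ≤ V t := fun t =>
    le_trans (mul_nonneg hlP.le (sq_nonneg _)) (hVpos t)
  -- derivative of V
  have hVd : ∀ t ≥ (0:ℝ), HasDerivAt V (2 * ⟪mv P (e t), ed t⟫) t := by
    intro t ht
    have h1 : HasDerivAt (fun s => mv P (e s)) (mv P (ed t)) t := by
      simp only [mv_eq_clm]
      exact (LinearMap.toContinuousLinearMap
        (Matrix.toEuclideanLin P)).hasFDerivAt.comp_hasDerivAt t (hed t ht)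
    have h2 := HasDerivAt.inner ℝ (hed t ht) h1
    refine h2.congr_deriv ?_
    have ha : ⟪ed t, mv P (e t)⟫ = ⟪mv P (e t), ed t⟫ := real_inner_comm _ _
    have hb : ⟪mv P (e t), ed t⟫ = ⟪e t, mv P (ed t)⟫ := by
      rw [inner_mv, herm_transpose hP.isHermitian]
    show ⟪e t, mv P (ed t)⟫ + ⟪ed t, mv P (e t)⟫ = 2 * ⟪mv P (e t), ed t⟫
    rw [ha, ← hb]; ring
  -- differential inequality
  have hVineq : ∀ t ≥ (0:ℝ), 2 * ⟪mv P (e t), ed t⟫ ≤ -c * V t + D := by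
    intro t ht
    have hsplit : ⟪mv P (e t), ed t⟫ =
        ⟪mv P (e t), mv A (e t)⟫ + ⟪mv P (e t), mv B (v t)⟫ - ⟪mv P (e t), R (x t)⟫ := by
      rw [hed_def]
      simp only
      rw [inner_sub_right, inner_add_right]
    -- A-term
    have hA1 : ⟪mv P (e t), mv A (e t)⟫ = ⟪e t, mv (P * A) (e t)⟫ := by
      rw [inner_mv, herm_transpose hP.isHermitian, mv_mv]
    have hA2 : ⟪mv P (e t), mv A (e t)⟫ = ⟪e t, mv (Aᵀ * P) (e t)⟫ := by
      rw [real_inner_comm, inner_mv, mv_mv]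
    have hQterm : ⟪mv P (e t), mv A (e t)⟫ + ⟪mv P (e t), mv A (e t)⟫
        = -⟪e t, mv Q (e t)⟫ := by
      nth_rewrite 2 [hA2]
      rw [hA1, ← inner_add_right, ← mv_addM, hLyap, mv_negM, inner_neg_right]
    -- R-term
    have hneg : ⟪mv P (e t), -(R (x t))⟫ = -⟪mv P (e t), R (x t)⟫ := inner_neg_right _ _
    have hRt : 2 * ⟪mv P (e t), -(R (x t))⟫ ≤
        εR * ⟪e t, mv Q (e t)⟫ + NR ^ 2 * Rbar ^ 2 / εR := by
      have h1 : ⟪mv P (e t), -(R (x t))⟫ =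
          ⟪mv (matSqrt Q) (e t), mv (invSqrt Q * P) (-(R (x t)))⟫ :=
        inner_P_split hQ hP.isHermitian _ _
      have h2 := two_mul_inner_le hεR (mv (matSqrt Q) (e t)) (mv (invSqrt Q * P) (-(R (x t))))
      rw [← h1, norm_mv_sqrt_sq hQ] at h2
      have h3 : ‖mv (invSqrt Q * P) (-(R (x t)))‖ ≤ NR * Rbar := by
        refine le_trans (norm_mv_le _ _) ?_
        rw [norm_neg]
        exact mul_le_mul_of_nonneg_left (hRb _ (hxX t ht)) hNR0
      have h4 : ‖mv (invSqrt Q * P) (-(R (x t)))‖ ^ 2 ≤ NR ^ 2 * Rbar ^ 2 := by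
        rw [← mul_pow]
        exact pow_le_pow_left₀ (norm_nonneg _) h3 2
      have h5 : ‖mv (invSqrt Q * P) (-(R (x t)))‖ ^ 2 / εR ≤ NR ^ 2 * Rbar ^ 2 / εR :=
        (div_le_div_iff_of_pos_right hεR).2 h4
      linarith
    -- B-term
    have hBt : 2 * ⟪mv P (e t), mv B (v t)⟫ ≤
        εv * ⟪e t, mv Q (e t)⟫ + NB ^ 2 * vbar ^ 2 / εv := by
      have h1 : ⟪mv P (e t), mv B (v t)⟫ =
          ⟪mv (matSqrt Q) (e t), mv (invSqrt Q * P * B) (v t)⟫ := by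
        rw [inner_P_split hQ hP.isHermitian, mv_mv]
      have h2 := two_mul_inner_le hεv (mv (matSqrt Q) (e t)) (mv (invSqrt Q * P * B) (v t))
      rw [← h1, norm_mv_sqrt_sq hQ] at h2
      have h3 : ‖mv (invSqrt Q * P * B) (v t)‖ ≤ NB * vbar :=
        le_trans (norm_mv_le _ _) (mul_le_mul_of_nonneg_left (hv t ht) hNB0)
      have h4 : ‖mv (invSqrt Q * P * B) (v t)‖ ^ 2 ≤ NB ^ 2 * vbar ^ 2 := by
        rw [← mul_pow]
        exact pow_le_pow_left₀ (norm_nonneg _) h3 2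
      have h5 : ‖mv (invSqrt Q * P * B) (v t)‖ ^ 2 / εv ≤ NB ^ 2 * vbar ^ 2 / εv :=
        (div_le_div_iff_of_pos_right hεv).2 h4
      linarith
    have hDeq : NR ^ 2 * Rbar ^ 2 / εR + NB ^ 2 * vbar ^ 2 / εv = D := by
      rw [hD_def]; ring
    have hq1 : lamMin Q * ‖e t‖ ^ 2 ≤ ⟪e t, mv Q (e t)⟫ := lamMin_quad hQ.isHermitian _
    have hq2 : V t ≤ lamMax P * ‖e t‖ ^ 2 := quad_lamMax hP.isHermitian _
    have hcl : c * lamMax P = (1 - εR - εv) * lamMin Q := div_mul_cancel₀ _ hLP.ne'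
    have k1 : c * V t ≤ ⟪e t, mv Q (e t)⟫ - εR * ⟪e t, mv Q (e t)⟫ - εv * ⟪e t, mv Q (e t)⟫ := by
      calc c * V t ≤ c * (lamMax P * ‖e t‖ ^ 2) := mul_le_mul_of_nonneg_left hq2 hc.le
        _ = (1 - εR - εv) * (lamMin Q * ‖e t‖ ^ 2) := by rw [← mul_assoc, hcl]; ring
        _ ≤ (1 - εR - εv) * ⟪e t, mv Q (e t)⟫ := mul_le_mul_of_nonneg_left hq1 hone.le
        _ = _ := by ring
    have hsplit2 : 2 * ⟪mv P (e t), ed t⟫ =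
        (⟪mv P (e t), mv A (e t)⟫ + ⟪mv P (e t), mv A (e t)⟫) +
          (2 * ⟪mv P (e t), mv B (v t)⟫ + 2 * ⟪mv P (e t), -(R (x t))⟫) := by
      rw [hsplit, hneg]; ring
    have hfin : 2 * ⟪mv P (e t), ed t⟫ ≤
        -(⟪e t, mv Q (e t)⟫ - εR * ⟪e t, mv Q (e t)⟫ - εv * ⟪e t, mv Q (e t)⟫) + D := by
      rw [hsplit2, hQterm]
      have hsum2 := add_le_add hBt hRt
      refine le_trans (add_le_add_right hsum2 _) (le_of_eq ?_)
      rw [← hDeq]; ring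
    have k2 : -(⟪e t, mv Q (e t)⟫ - εR * ⟪e t, mv Q (e t)⟫ - εv * ⟪e t, mv Q (e t)⟫) + D ≤
        -c * V t + D := by
      rw [neg_mul]
      exact add_le_add_left (neg_le_neg k1) D
    exact le_trans hfin k2
  -- Gronwall
  have hVle : ∀ t ≥ (0:ℝ), V t ≤ V 0 * Real.exp (-c * t) + D / c := by
    intro t ht
    have hG := le_gronwallBound_of_liminf_deriv_right_le (f := V)
      (f' := fun s => 2 * ⟪mv P (e s), ed s⟫) (δ := V 0) (K := -c) (ε := D) (a := 0) (b := t)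
      (fun s hs => ((hVd s hs.1).continuousAt.continuousWithinAt))
      (fun s hs r hr => ((hVd s hs.1).hasDerivWithinAt.liminf_right_slope_le hr))
      le_rfl
      (fun s hs => hVineq s hs.1)
      t ⟨ht, le_rfl⟩
    rw [gronwallBound_of_K_ne_0 (by linarith : (-c) ≠ 0)] at hG
    simp only [sub_zero] at hG
    have hexp1 : Real.exp (-c * t) ≤ 1 := Real.exp_le_one_iff.2 (by nlinarith [mul_nonneg hc.le ht])
    have hDc : 0 ≤ D / c := div_nonneg hD0 hc.le
    have hrw : D / (-c) * (Real.exp (-c * t) - 1) = D / c * (1 - Real.exp (-c * t)) := by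
      rw [div_neg]; ring
    rw [hrw] at hG
    have h6 : D / c * (1 - Real.exp (-c * t)) ≤ D / c :=
      mul_le_of_le_one_right hDc (by linarith [Real.exp_nonneg (-c * t)])
    exact le_trans hG (add_le_add_right h6 (V 0 * Real.exp (-c * t)))
  -- limit
  set L : ℝ := Real.sqrt ((D / c) / lamMin P) with hL_def
  set g : ℝ → ℝ := fun t => Real.sqrt ((V 0 * Real.exp (-c * t) + D / c) / lamMin P) with hg_def
  have hgL : Tendsto g atTop (nhds L) := by
    have h1 : Tendsto (fun t : ℝ => c * t) atTop atTop :=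
      Tendsto.const_mul_atTop hc tendsto_id
    have h2 : Tendsto (fun t : ℝ => Real.exp (-c * t)) atTop (nhds 0) := by
      have h2' := Real.tendsto_exp_neg_atTop_nhds_zero.comp h1
      exact h2'.congr fun t => by simp [Function.comp, neg_mul]
    have h3 : Tendsto (fun t : ℝ => (V 0 * Real.exp (-c * t) + D / c) / lamMin P) atTop
        (nhds ((D / c) / lamMin P)) := by
      have := ((h2.const_mul (V 0)).add_const (D / c)).div_const (lamMin P)
      simpa using this
    exact (Real.continuous_sqrt.continuousAt.tendsto).comp h3
  have hbound : ∀ᶠ t in atTop, ‖e t‖ ≤ g t := by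
    filter_upwards [eventually_ge_atTop (0:ℝ)] with t ht
    have h1 : ‖e t‖ ^ 2 ≤ (V 0 * Real.exp (-c * t) + D / c) / lamMin P := by
      rw [le_div_iff₀ hlP, mul_comm]
      exact le_trans (hVpos t) (hVle t ht)
    calc ‖e t‖ = Real.sqrt (‖e t‖ ^ 2) := (Real.sqrt_sq (norm_nonneg _)).symm
      _ ≤ g t := Real.sqrt_le_sqrt h1
  have hls : limsup (fun t => ‖e t‖) atTop ≤ L := by
    have h1 : limsup (fun t => ‖e t‖) atTop ≤ limsup g atTop :=
      limsup_le_limsup hbound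
        (isCoboundedUnder_le_of_le atTop fun t => norm_nonneg _)
        hgL.isBoundedUnder_le
    rwa [hgL.limsup_eq] at h1
  have hLeq : L = Real.sqrt (1 / (c * lamMin P)) * Real.sqrt D := by
    rw [hL_def]
    have h1 : (D / c) / lamMin P = 1 / (c * lamMin P) * D := by
      field_simp
    rw [h1, Real.sqrt_mul (div_nonneg zero_le_one (mul_nonneg hc.le hlP.le)) D]
  calc limsup (fun t => ‖zh t - T (x t)‖) atTop = limsup (fun t => ‖e t‖) atTop := rfl
    _ ≤ L := hls
    _ = _ := by rw [hLeq]
end
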